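/- (Sufficient condition for non-convexity of ∂F_c, real case.) Assume m ≥ 3, n ≥ 2, and let c : Fin m → ℝ be such that (c·A).PosSemidef, the kernel of c·A is one-dimensional, i.e. there is x₀ ≠ 0 with (c·A).mulVec x₀ = 0 and every x with (c·A).mulVec x = 0 is a scalar multiple of x₀, and the equation (c·A).mulVec x_b = -(c·b) has a solution x_b. Define u k := x₀ ⬝ᵥ (A k).mulVec x₀ and v k := x₀ ⬝ᵥ ((A k).mulVec x_b + b k) for k : Fin m, and assume u and v are linearly independent over ℝ (LinearIndependent ℝ ![u, v]). Then ∂F_c = f '' {x_b + t • x₀ | t : ℝ}, and this set is not convex. -/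

import Mathlib

open Matrix

theorem boundary_nonconvexity_sufficient_condition (n m : ℕ)
    (hm : 3 ≤ m) (hn : 2 ≤ n)
    (A : Fin m → Matrix (Fin n) (Fin n) ℝ) (hA : ∀ k, (A k)ᵀ = A k)
    (b : Fin m → (Fin n → ℝ))
    (f : (Fin n → ℝ) → (Fin m → ℝ))
    (hf : ∀ x k, f x k = x ⬝ᵥ (A k).mulVec x + 2 * (b k ⬝ᵥ x))
    (c : Fin m → ℝ)
    (hpsd : (∑ k, c k • A k).PosSemidef)
    (x₀ : Fin n → ℝ) (hx₀ : x₀ ≠ 0) (hker : (∑ k, c k • A k).mulVec x₀ = 0)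
    (hker1 : ∀ x : Fin n → ℝ, (∑ k, c k • A k).mulVec x = 0 → ∃ t : ℝ, x = t • x₀)
    (x_b : Fin n → ℝ) (hxb : (∑ k, c k • A k).mulVec x_b = -(∑ k, c k • b k))
    (u v : Fin m → ℝ)
    (hu : ∀ k, u k = x₀ ⬝ᵥ (A k).mulVec x₀)
    (hv : ∀ k, v k = x₀ ⬝ᵥ ((A k).mulVec x_b + b k))
    (hindep : LinearIndependent ℝ ![u, v]) :
    {y ∈ Set.range f | ∀ y' ∈ Set.range f, c ⬝ᵥ y ≤ c ⬝ᵥ y'} =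
      f '' {x : Fin n → ℝ | ∃ t : ℝ, x = x_b + t • x₀} ∧
    ¬ Convex ℝ (f '' {x : Fin n → ℝ | ∃ t : ℝ, x = x_b + t • x₀}) := by
  set M : Matrix (Fin n) (Fin n) ℝ := ∑ k, c k • A k with hM
  set β : Fin n → ℝ := ∑ k, c k • b k with hβ
  have swap : ∀ (B : Matrix (Fin n) (Fin n) ℝ), Bᵀ = B → ∀ x y : Fin n → ℝ,
      x ⬝ᵥ B.mulVec y = y ⬝ᵥ B.mulVec x := by
    intro B hB x y
    rw [dotProduct_mulVec, ← mulVec_transpose, hB, dotProduct_comm]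
  have hMsymm : Mᵀ = M := by
    simp [hM, transpose_sum, transpose_smul, hA]
  have dotsum : ∀ (x : Fin n → ℝ) (z : Fin m → (Fin n → ℝ)),
      x ⬝ᵥ (∑ k, z k) = ∑ k, x ⬝ᵥ z k := by
    intro x z
    simp only [dotProduct, Finset.sum_apply, Finset.mul_sum]
    rw [Finset.sum_comm]
  have hMv : ∀ y, M.mulVec y = ∑ k, c k • ((A k).mulVec y) := by
    intro y; funext i
    simp only [hM, mulVec, dotProduct, Matrix.sum_apply, Finset.sum_apply, Matrix.smul_apply,
      Pi.smul_apply, smul_eq_mul, Finset.sum_mul, Finset.mul_sum, mul_assoc]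
    rw [Finset.sum_comm]
  have cdot : ∀ x, c ⬝ᵥ f x = x ⬝ᵥ M.mulVec x + 2 * (β ⬝ᵥ x) := by
    intro x
    have h1 : x ⬝ᵥ M.mulVec x = ∑ k, c k * (x ⬝ᵥ (A k).mulVec x) := by
      rw [hMv, dotsum]
      simp [dotProduct_smul]
    have h2 : β ⬝ᵥ x = ∑ k, c k * (b k ⬝ᵥ x) := by
      rw [hβ, dotProduct_comm, dotsum]
      refine Finset.sum_congr rfl fun k _ => ?_
      rw [dotProduct_smul, smul_eq_mul, dotProduct_comm]
    rw [h1, h2, dotProduct]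
    simp only [hf]
    rw [Finset.mul_sum, ← Finset.sum_add_distrib]
    congr 1; funext k; ring
  have hexp : ∀ h, c ⬝ᵥ f (x_b + h) = c ⬝ᵥ f x_b + h ⬝ᵥ M.mulVec h := by
    intro h
    simp only [cdot, mulVec_add, dotProduct_add, add_dotProduct]
    rw [swap M hMsymm x_b h]
    simp only [hxb, dotProduct_neg]
    try rw [dotProduct_comm x_b β]
    try rw [dotProduct_comm h β]
    ring
  have hge : ∀ x, c ⬝ᵥ f x_b ≤ c ⬝ᵥ f x := by
    intro x
    have h1 := hexp (x - x_b)
    rw [add_sub_cancel] at h1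
    have h2 : 0 ≤ (x - x_b) ⬝ᵥ M.mulVec (x - x_b) := by
      simpa using hpsd.dotProduct_mulVec_nonneg (x - x_b)
    rw [h1]; linarith
  have hline : ∀ t : ℝ, c ⬝ᵥ f (x_b + t • x₀) = c ⬝ᵥ f x_b := by
    intro t
    rw [hexp]
    simp [mulVec_smul, hker]
  have hpar : ∀ t : ℝ, f (x_b + t • x₀) = f x_b + (2*t) • v + t^2 • u := by
    intro t; funext k
    simp only [Pi.add_apply, Pi.smul_apply, smul_eq_mul, hf, hu k, hv k]
    rw [mulVec_add, mulVec_smul]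
    simp only [dotProduct_add, add_dotProduct, dotProduct_smul, smul_dotProduct,
      smul_eq_mul, swap (A k) (hA k) x_b x₀, dotProduct_comm x₀ (b k)]
    ring
  constructor
  · ext y
    simp only [Set.mem_setOf_eq, Set.mem_image, Set.mem_range]
    constructor
    · rintro ⟨⟨x, rfl⟩, hmin⟩
      have h1 : c ⬝ᵥ f x ≤ c ⬝ᵥ f x_b := hmin _ ⟨x_b, rfl⟩
      have h2 := hge x
      have h3 := hexp (x - x_b)
      rw [add_sub_cancel] at h3
      have h4 : (x - x_b) ⬝ᵥ M.mulVec (x - x_b) = 0 := by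
        rw [h3] at h1; linarith
      have h5 : M.mulVec (x - x_b) = 0 :=
        (hpsd.dotProduct_mulVec_zero_iff (x - x_b)).mp (by simpa using h4)
      obtain ⟨t, ht⟩ := hker1 _ h5
      exact ⟨x, ⟨t, by rw [← ht]; abel⟩, rfl⟩
    · rintro ⟨x, ⟨t, rfl⟩, rfl⟩
      refine ⟨⟨_, rfl⟩, ?_⟩
      rintro y' ⟨x', rfl⟩
      rw [hline t]
      exact hge x'
  · intro hconv
    have h1 : f x_b + (2*(-1:ℝ)) • v + ((-1:ℝ))^2 • u ∈
        f '' {x : Fin n → ℝ | ∃ t : ℝ, x = x_b + t • x₀} :=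
      ⟨x_b + (-1:ℝ) • x₀, ⟨-1, rfl⟩, hpar (-1)⟩
    have h2 : f x_b + (2*(1:ℝ)) • v + ((1:ℝ))^2 • u ∈
        f '' {x : Fin n → ℝ | ∃ t : ℝ, x = x_b + t • x₀} :=
      ⟨x_b + (1:ℝ) • x₀, ⟨1, rfl⟩, hpar 1⟩
    have hmid := hconv h1 h2 (by norm_num : (0:ℝ) ≤ 1/2) (by norm_num : (0:ℝ) ≤ 1/2)
      (by norm_num : (1:ℝ)/2 + 1/2 = 1)
    obtain ⟨x, ⟨t, rfl⟩, hx⟩ := hmid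
    rw [hpar t] at hx
    have key2 : ∀ k, (t^2 - 1) * u k + (2*t) * v k = 0 := by
      intro k
      have := congrFun hx k
      simp only [Pi.add_apply, Pi.smul_apply, smul_eq_mul] at this
      nlinarith [this]
    have hzero : (t^2 - 1) • u + (2*t) • v = 0 := by
      funext k
      simpa [Pi.add_apply, Pi.smul_apply, smul_eq_mul] using key2 k
    obtain ⟨e1, e2⟩ := LinearIndependent.pair_iff.mp hindep (t^2 - 1) (2*t) hzero
    have ht : t = 0 := by linarith
    rw [ht] at e1; norm_num at e1
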